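/- The set of monomials {uⁱ(du)ʲdᵏ : i, j, k ≥ 0} is a ℂ-basis of the down-up algebra A(α,β,γ) (Poincaré–Birkhoff–Witt theorem for down-up algebras). -/

import Mathlib

open FreeAlgebra

/-- The defining relations of the down-up algebra A(α,β,γ): with d = ι true,
u = ι false, we impose d²u = α·dud + β·ud² + γ·d and du² = α·udu + β·u²d + γ·u. -/
inductive DownUpRel (α β γ : ℂ) : FreeAlgebra ℂ Bool → FreeAlgebra ℂ Bool → Prop
  | rel1 : DownUpRel α β γ (ι ℂ true * ι ℂ true * ι ℂ false)
      (α • (ι ℂ true * ι ℂ false * ι ℂ true) + β • (ι ℂ false * ι ℂ true * ι ℂ true)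
        + γ • ι ℂ true)
  | rel2 : DownUpRel α β γ (ι ℂ true * ι ℂ false * ι ℂ false)
      (α • (ι ℂ false * ι ℂ true * ι ℂ false) + β • (ι ℂ false * ι ℂ false * ι ℂ true)
        + γ • ι ℂ false)

/-- The down-up algebra A(α,β,γ). -/
abbrev DownUp (α β γ : ℂ) := RingQuot (DownUpRel α β γ)

/-- The generator d of the down-up algebra. -/
noncomputable def DownUp.d (α β γ : ℂ) : DownUp α β γ :=
  RingQuot.mkAlgHom ℂ (DownUpRel α β γ) (ι ℂ true)

/-- The generator u of the down-up algebra. -/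
noncomputable def DownUp.u (α β γ : ℂ) : DownUp α β γ :=
  RingQuot.mkAlgHom ℂ (DownUpRel α β γ) (ι ℂ false)

namespace DownUpPBW

abbrev W := List Bool

/-- number of inversions: pairs (d=true before u=false) -/
def inv : W → ℕ
  | [] => 0
  | true :: t => t.count false + inv t
  | false :: t => inv t

lemma inv_append (a b : W) :
    inv (a ++ b) = inv a + inv b + a.count true * b.count false := by
  induction a with
  | nil => simp [inv]
  | cons x t ih =>
    cases x <;> simp [inv, ih, List.count_cons, List.count_append] <;> ring

lemma inv_triple (x m y : W) :
    inv (x ++ m ++ y) = inv x + inv y + inv m + m.count true * y.count false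
      + x.count true * (m.count false + y.count false) := by
  rw [List.append_assoc, inv_append, inv_append, List.count_append]; ring

/-- the two bad patterns: `pat true = ddu`, `pat false = duu` (d = true, u = false) -/
def pat : Bool → W
  | true => [true, true, false]
  | false => [true, false, false]

def m1 : Bool → W
  | true => [true, false, true]
  | false => [false, true, false]

def m2 : Bool → W
  | true => [false, true, true]
  | false => [false, false, true]

def m3 : Bool → W
  | true => [true]
  | false => [false]

@[simp] lemma pat_t : pat true = [true, true, false] := rfl
@[simp] lemma pat_f : pat false = [true, false, false] := rfl
@[simp] lemma m1_t : m1 true = [true, false, true] := rfl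
@[simp] lemma m1_f : m1 false = [false, true, false] := rfl
@[simp] lemma m2_t : m2 true = [false, true, true] := rfl
@[simp] lemma m2_f : m2 false = [false, false, true] := rfl
@[simp] lemma m3_t : m3 true = [true] := rfl
@[simp] lemma m3_f : m3 false = [false] := rfl

lemma inv_m1_lt (p : Bool) (x y : W) :
    inv (x ++ m1 p ++ y) < inv (x ++ pat p ++ y) := by
  cases p <;> rw [inv_triple, inv_triple] <;>
    simp [inv, List.count_cons] <;> omega

lemma inv_m2_lt (p : Bool) (x y : W) :
    inv (x ++ m2 p ++ y) < inv (x ++ pat p ++ y) := by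
  cases p <;> rw [inv_triple, inv_triple] <;>
    simp [inv, List.count_cons] <;> omega

lemma inv_m3_lt (p : Bool) (x y : W) :
    inv (x ++ m3 p ++ y) < inv (x ++ pat p ++ y) := by
  cases p <;> rw [inv_triple, inv_triple] <;>
    simp [inv, List.count_cons, Nat.mul_add, Nat.mul_one] <;> omega

/-- find an occurrence of a bad pattern -/
def split : W → Option (W × Bool × W)
  | true :: true :: false :: y => some ([], true, y)
  | true :: false :: false :: y => some ([], false, y)
  | b :: t => (split t).map fun q => (b :: q.1, q.2.1, q.2.2)
  | [] => none

lemma split_eq (w : W) : ∀ {x : W} {p : Bool} {y : W},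
    split w = some (x, p, y) → w = x ++ pat p ++ y := by
  induction w with
  | nil => intro x p y h; simp [split] at h
  | cons b t ih =>
    intro x p y h
    have step : (split t).map (fun q => (b :: q.1, q.2.1, q.2.2)) = some (x, p, y) →
        b :: t = x ++ pat p ++ y := by
      intro h'
      rw [Option.map_eq_some_iff] at h'
      obtain ⟨⟨x', p', y'⟩, h1, h2⟩ := h'
      obtain ⟨rfl, rfl, rfl⟩ : b :: x' = x ∧ p' = p ∧ y' = y := by
        simpa using h2
      simp [ih h1]
    cases b with
    | false => exact step h
    | true =>
      rcases t with _ | ⟨c, t2⟩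
      · simp [split] at h
      cases c with
      | true =>
        rcases t2 with _ | ⟨e, t3⟩
        · simp [split] at h
        cases e with
        | false =>
          obtain ⟨rfl, rfl, rfl⟩ : ([] : W) = x ∧ true = p ∧ t3 = y := by
            simpa [split] using h
          simp
        | true => exact step h
      | false =>
        rcases t2 with _ | ⟨e, t3⟩
        · simp [split] at h
        cases e with
        | false =>
          obtain ⟨rfl, rfl, rfl⟩ : ([] : W) = x ∧ false = p ∧ t3 = y := by
            simpa [split] using h
          simp
        | true => exact step h

lemma split_cons_none {b : Bool} {t : W} (h : split (b :: t) = none) : split t = none := by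
  cases b with
  | false => simpa [split, Option.map_eq_none_iff] using h
  | true =>
    rcases t with _ | ⟨c, t2⟩
    · simp [split]
    cases c with
    | true =>
      rcases t2 with _ | ⟨e, t3⟩
      · simp [split]
      cases e with
      | false => simp [split] at h
      | true => simpa [split, Option.map_eq_none_iff] using h
    | false =>
      rcases t2 with _ | ⟨e, t3⟩
      · simp [split]
      cases e with
      | false => simp [split] at h
      | true => simpa [split, Option.map_eq_none_iff] using h

lemma split_append_ne_none (x : W) (p : Bool) (y : W) :
    split (x ++ pat p ++ y) ≠ none := by
  induction x with
  | nil => cases p <;> simp [split]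
  | cons b x' ih => exact fun h => ih (split_cons_none h)

def duRep : ℕ → W
  | 0 => []
  | j+1 => true :: false :: duRep j

def nf (q : ℕ × ℕ × ℕ) : W :=
  List.replicate q.1 false ++ (duRep q.2.1 ++ List.replicate q.2.2 true)

def pJK : W → ℕ × ℕ
  | true :: false :: t => ((pJK t).1 + 1, (pJK t).2)
  | l => (0, l.length)

def parse : W → ℕ × ℕ × ℕ
  | false :: t => ((parse t).1 + 1, (parse t).2)
  | t => (0, pJK t)

lemma nf_u (i j k) : nf (i+1, j, k) = false :: nf (i, j, k) := by
  simp [nf, List.replicate_succ]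

lemma nf_du (j k) : nf (0, j+1, k) = true :: false :: nf (0, j, k) := by
  simp [nf, duRep]

lemma nf_d (k) : nf (0, 0, k) = List.replicate k true := by
  simp [nf, duRep]

lemma pJK_duRep (j k : ℕ) : pJK (duRep j ++ List.replicate k true) = (j, k) := by
  induction j with
  | zero =>
    rcases k with _ | k
    · simp [duRep, pJK]
    rcases k with _ | k
    · simp [duRep, pJK]
    · simp only [duRep, List.nil_append, List.replicate_succ]
      rw [show pJK (true :: true :: List.replicate k true)
          = (0, (true :: true :: List.replicate k true).length) from rfl]
      simp
  | succ j ih => simp [duRep, pJK, ih]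

lemma parse_nf (q : ℕ × ℕ × ℕ) : parse (nf q) = q := by
  obtain ⟨i, j, k⟩ := q
  induction i with
  | zero =>
    have hb : nf (0, j, k) = duRep j ++ List.replicate k true := by simp [nf]
    rcases j with _ | j
    · rcases k with _ | k
      · simp [nf, duRep, parse, pJK]
      · rw [nf_d, List.replicate_succ]
        show ((0:ℕ), pJK (true :: List.replicate k true)) = ((0:ℕ), (0:ℕ), k+1)
        rw [show (true :: List.replicate k true : W)
            = duRep 0 ++ List.replicate (k+1) true from by simp [duRep, List.replicate_succ]]
        rw [pJK_duRep]
    · rw [nf_du]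
      show (0, pJK (true :: false :: nf (0, j, k))) = (0, j + 1, k)
      rw [show pJK (true :: false :: nf (0, j, k)) = ((pJK (nf (0,j,k))).1 + 1, (pJK (nf (0,j,k))).2) from rfl]
      rw [show nf (0, j, k) = duRep j ++ List.replicate k true from by simp [nf]]
      simp [pJK_duRep]
  | succ i ih => rw [nf_u]; show ((parse (nf (i,j,k))).1 + 1, (parse (nf (i,j,k))).2) = _; rw [ih]

lemma no_pat : ∀ (x : W) (i j k : ℕ) (p : Bool) (y : W),
    List.replicate i false ++ (duRep j ++ List.replicate k true) ≠ x ++ pat p ++ y := by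
  intro x
  induction x with
  | nil =>
    intro i j k p y h
    cases i with
    | succ i => cases p <;> simp [List.replicate_succ] at h
    | zero =>
      cases j with
      | zero =>
        simp [duRep] at h
        have hf : false ∈ List.replicate k true := by
          rw [h]; cases p <;> simp
        exact absurd (List.eq_of_mem_replicate hf) (by simp)
      | succ j =>
        cases p with
        | true => simp [duRep] at h
        | false =>
          simp [duRep] at h
          cases j with
          | zero => cases k <;> simp [duRep, List.replicate_succ] at h
          | succ j => simp [duRep] at h
  | cons b x ih =>
    intro i j k p y h
    rw [List.cons_append, List.cons_append] at h
    cases i with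
    | succ i =>
      rw [List.replicate_succ, List.cons_append] at h
      injection h with h1 h2
      exact ih i j k p y (by simpa using h2)
    | zero =>
      cases j with
      | succ j =>
        rw [show List.replicate 0 false ++ (duRep (j+1) ++ List.replicate k true)
            = true :: (List.replicate 1 false ++ (duRep j ++ List.replicate k true)) from by
          simp [duRep]] at h
        injection h with h1 h2
        exact ih 1 j k p y h2
      | zero =>
        cases k with
        | zero => simp [duRep] at h
        | succ k =>
          rw [show List.replicate 0 false ++ (duRep 0 ++ List.replicate (k+1) true)
              = true :: (List.replicate 0 false ++ (duRep 0 ++ List.replicate k true)) from by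
            simp [duRep, List.replicate_succ]] at h
          injection h with h1 h2
          exact ih 0 0 k p y h2

lemma split_nf (q : ℕ × ℕ × ℕ) : split (nf q) = none := by
  cases h : split (nf q) with
  | none => rfl
  | some r =>
    obtain ⟨x, p, y⟩ := r
    exact absurd (split_eq _ h) (no_pat x q.1 q.2.1 q.2.2 p y)

lemma allTrue : ∀ (t : W), split (true :: true :: t) = none → ∀ c ∈ t, c = true := by
  intro t
  induction t with
  | nil => simp
  | cons c t' ih =>
    intro h
    cases c with
    | false => simp [split] at h
    | true =>
      intro c hc
      rcases List.mem_cons.mp hc with rfl | hc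
      · rfl
      · exact ih (split_cons_none h) c hc

theorem split_none : ∀ (w : W), split w = none → w = nf (parse w)
  | [], _ => by simp [nf, parse, pJK, duRep]
  | false :: t, h => by
      have ih := split_none t (split_cons_none h)
      show false :: t = nf ((parse t).1 + 1, (parse t).2.1, (parse t).2.2)
      rw [nf_u]
      show false :: t = false :: nf (parse t)
      rw [← ih]
  | [true], h => by simp [parse, pJK, nf, duRep, List.replicate]
  | true :: true :: t, h => by
      have hall : ∀ c ∈ (true :: true :: t : W), c = true := by
        intro c hc
        rcases List.mem_cons.mp hc with rfl | hc
        · rfl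
        rcases List.mem_cons.mp hc with rfl | hc
        · rfl
        · exact allTrue t h c hc
      have hrep := List.eq_replicate_length.mpr hall
      show true :: true :: t = nf (0, 0, (true :: true :: t).length)
      rw [nf_d]
      exact hrep
  | true :: false :: t, h => by
      have ih := split_none t (split_cons_none (split_cons_none h))
      rcases t with _ | ⟨c, t'⟩
      · show _ = nf (0, pJK [true, false])
        simp [pJK, nf, duRep]
      cases c with
      | false => simp [split] at h
      | true =>
        show true :: false :: (true :: t')
            = nf (0, (pJK (true :: t')).1 + 1, (pJK (true :: t')).2)
        rw [nf_du]
        show _ = true :: false :: nf (parse (true :: t'))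
        rw [← ih]

lemma pat_cases {x y x' y' : W} {p p' : Bool} (h : x ++ pat p ++ y = x' ++ pat p' ++ y') :
    (x = x' ∧ p = p' ∧ y = y') ∨
    (∃ z, x' = x ++ pat p ++ z ∧ y = z ++ pat p' ++ y') ∨
    (∃ z, x = x' ++ pat p' ++ z ∧ y' = z ++ pat p ++ y) ∨
    (p = true ∧ p' = false ∧ x' = x ++ [true] ∧ y = false :: y') ∨
    (p' = true ∧ p = false ∧ x = x' ++ [true] ∧ y' = false :: y) := by
  have key : ∀ (u v u' v' : W) (q q' : Bool), u ++ pat q ++ v = u' ++ pat q' ++ v' →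
      (∃ z, u' = u ++ z ∧ pat q ++ v = z ++ (pat q' ++ v')) →
      (u = u' ∧ q = q' ∧ v = v') ∨
      (∃ z, u' = u ++ pat q ++ z ∧ v = z ++ pat q' ++ v') ∨
      (q = true ∧ q' = false ∧ u' = u ++ [true] ∧ v = false :: v') := by
    intro u v u' v' q q' _ ⟨z, hz1, hz2⟩
    rcases z with _ | ⟨a, z⟩
    · left
      refine ⟨by simpa using hz1.symm, ?_⟩
      simp only [List.nil_append] at hz2
      cases q <;> cases q' <;> simp_all
    rcases z with _ | ⟨b, z⟩
    · right; right
      cases q <;> cases q' <;> simp_all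
    rcases z with _ | ⟨c, z⟩
    · exfalso
      cases q <;> cases q' <;> simp_all
    · right; left
      refine ⟨z, ?_, ?_⟩ <;> cases q <;> cases q' <;> simp_all
  have h' : x ++ (pat p ++ y) = x' ++ (pat p' ++ y') := by
    simpa [List.append_assoc] using h
  rcases List.append_eq_append_iff.mp h' with hc | hc
  · rcases key x y x' y' p p' h hc with h1 | h2 | h3
    · exact Or.inl h1
    · exact Or.inr (Or.inl h2)
    · exact Or.inr (Or.inr (Or.inr (Or.inl h3)))
  · rcases key x' y' x y p' p h.symm hc with h1 | h2 | h3
    · exact Or.inl ⟨h1.1.symm, h1.2.1.symm, h1.2.2.symm⟩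
    · exact Or.inr (Or.inr (Or.inl h2))
    · exact Or.inr (Or.inr (Or.inr (Or.inr h3)))

noncomputable section

abbrev V := (ℕ × ℕ × ℕ) →₀ ℂ

def e (q : ℕ × ℕ × ℕ) : V := Finsupp.single q 1

noncomputable def red (α β γ : ℂ) (w : W) : V :=
  match h : split w with
  | none => e (parse w)
  | some (x, p, y) =>
      α • red α β γ (x ++ m1 p ++ y) + β • red α β γ (x ++ m2 p ++ y) +
        γ • red α β γ (x ++ m3 p ++ y)
termination_by inv w
decreasing_by
  · rw [show w = x ++ pat p ++ y from split_eq _ h]; exact inv_m1_lt p x y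
  · rw [show w = x ++ pat p ++ y from split_eq _ h]; exact inv_m2_lt p x y
  · rw [show w = x ++ pat p ++ y from split_eq _ h]; exact inv_m3_lt p x y

lemma red_none {α β γ : ℂ} {w : W} (h : split w = none) :
    red α β γ w = e (parse w) := by
  rw [red]
  split
  · rfl
  · rename_i x p y h'
    rw [h] at h'; cases h'

lemma red_some {α β γ : ℂ} {w x y : W} {p : Bool} (h : split w = some (x, p, y)) :
    red α β γ w = α • red α β γ (x ++ m1 p ++ y) + β • red α β γ (x ++ m2 p ++ y)
      + γ • red α β γ (x ++ m3 p ++ y) := by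
  rw [red]
  split
  · rename_i h'; rw [h] at h'; cases h'
  · rename_i x' p' y' h'
    rw [h] at h'
    obtain ⟨rfl, rfl, rfl⟩ : x = x' ∧ p = p' ∧ y = y' := by
      have := Option.some.inj h'
      exact ⟨congrArg Prod.fst this, congrArg (fun q => q.2.1) this,
        congrArg (fun q => q.2.2) this⟩
    rfl

theorem red_step (α β γ : ℂ) : ∀ (n : ℕ) (x : W) (p : Bool) (y : W),
    inv (x ++ pat p ++ y) ≤ n →
    red α β γ (x ++ pat p ++ y) =
      α • red α β γ (x ++ m1 p ++ y) + β • red α β γ (x ++ m2 p ++ y)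
        + γ • red α β γ (x ++ m3 p ++ y) := by
  intro n
  induction n with
  | zero =>
    intro x p y hn
    exfalso
    rw [inv_triple] at hn
    cases p <;> simp [inv, List.count_cons] at hn
  | succ n IH =>
    intro x p y hn
    obtain ⟨⟨x₀, p₀, y₀⟩, hr⟩ : ∃ r, split (x ++ pat p ++ y) = some r := by
      cases hs : split (x ++ pat p ++ y) with
      | none => exact absurd hs (split_append_ne_none x p y)
      | some r => exact ⟨r, rfl⟩
    have hw : x ++ pat p ++ y = x₀ ++ pat p₀ ++ y₀ := split_eq _ hr
    have hred := red_some (α := α) (β := β) (γ := γ) hr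
    rcases pat_cases hw with ⟨rfl, rfl, rfl⟩ | ⟨z, hz1, hz2⟩ | ⟨z, hz1, hz2⟩ |
      ⟨hp, hp', hx, hy⟩ | ⟨hp, hp', hx, hy⟩
    · exact hred
    · -- our pattern strictly left of the found one
      subst hz1 hz2
      have assoc3 : ∀ (a m b : W), a ++ m ++ b = a ++ (m ++ b) := by
        intro a m b; rw [List.append_assoc]
      have key : ∀ mt : W,
          ((x ++ pat p ++ z) ++ mt ++ y₀ : W) = x ++ pat p ++ (z ++ (mt ++ y₀)) := by
        intro mt; simp [List.append_assoc]
      have key2 : ∀ ms : W,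
          (x ++ ms ++ (z ++ (pat p₀ ++ y₀)) : W) = (x ++ ms ++ z) ++ pat p₀ ++ y₀ := by
        intro ms; simp [List.append_assoc]
      have hbase : inv (x ++ pat p ++ (z ++ (pat p₀ ++ y₀))) ≤ n + 1 := by
        rw [← key]; rw [show ((x ++ pat p ++ z) ++ pat p₀ ++ y₀ : W)
          = x ++ pat p ++ (z ++ pat p₀ ++ y₀) from by simp [List.append_assoc]]
        simpa [List.append_assoc] using hn
      -- bounds for IH applications on the left side
      have hbL : ∀ mt : W, inv ((x ++ pat p ++ z) ++ mt ++ y₀) < inv ((x ++ pat p ++ z) ++ pat p₀ ++ y₀) →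
          inv (x ++ pat p ++ (z ++ (mt ++ y₀))) ≤ n := by
        intro mt hlt
        rw [key mt] at hlt
        rw [show ((x ++ pat p ++ z) ++ pat p₀ ++ y₀ : W)
          = x ++ pat p ++ (z ++ (pat p₀ ++ y₀)) from by simp [List.append_assoc]] at hlt
        omega
      have hbR : ∀ ms : W, inv (x ++ ms ++ (z ++ (pat p₀ ++ y₀))) < inv (x ++ pat p ++ (z ++ (pat p₀ ++ y₀))) →
          inv ((x ++ ms ++ z) ++ pat p₀ ++ y₀) ≤ n := by
        intro ms hlt
        rw [key2 ms] at hlt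
        omega
      rw [hred]
      rw [show ((x ++ pat p ++ z) ++ m1 p₀ ++ y₀ : W) = x ++ pat p ++ (z ++ (m1 p₀ ++ y₀)) from key _,
          show ((x ++ pat p ++ z) ++ m2 p₀ ++ y₀ : W) = x ++ pat p ++ (z ++ (m2 p₀ ++ y₀)) from key _,
          show ((x ++ pat p ++ z) ++ m3 p₀ ++ y₀ : W) = x ++ pat p ++ (z ++ (m3 p₀ ++ y₀)) from key _]
      rw [IH x p _ (hbL (m1 p₀) (inv_m1_lt p₀ _ _)),
          IH x p _ (hbL (m2 p₀) (inv_m2_lt p₀ _ _)),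
          IH x p _ (hbL (m3 p₀) (inv_m3_lt p₀ _ _))]
      rw [show (z ++ pat p₀ ++ y₀ : W) = z ++ (pat p₀ ++ y₀) from assoc3 _ _ _]
      rw [show (x ++ m1 p ++ (z ++ (pat p₀ ++ y₀)) : W) = (x ++ m1 p ++ z) ++ pat p₀ ++ y₀ from key2 _,
          show (x ++ m2 p ++ (z ++ (pat p₀ ++ y₀)) : W) = (x ++ m2 p ++ z) ++ pat p₀ ++ y₀ from key2 _,
          show (x ++ m3 p ++ (z ++ (pat p₀ ++ y₀)) : W) = (x ++ m3 p ++ z) ++ pat p₀ ++ y₀ from key2 _]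
      rw [IH (x ++ m1 p ++ z) p₀ y₀ (hbR (m1 p) (inv_m1_lt p x (z ++ (pat p₀ ++ y₀)))),
          IH (x ++ m2 p ++ z) p₀ y₀ (hbR (m2 p) (inv_m2_lt p x (z ++ (pat p₀ ++ y₀)))),
          IH (x ++ m3 p ++ z) p₀ y₀ (hbR (m3 p) (inv_m3_lt p x (z ++ (pat p₀ ++ y₀))))]
      simp only [List.append_assoc]
      module
    · -- the found pattern is strictly left of ours
      subst hz1 hz2
      have key : ∀ mt : W,
          (x₀ ++ mt ++ (z ++ pat p ++ y) : W) = (x₀ ++ mt ++ z) ++ pat p ++ y := by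
        intro mt; simp [List.append_assoc]
      have key2 : ∀ ms : W,
          ((x₀ ++ pat p₀ ++ z) ++ ms ++ y : W) = x₀ ++ pat p₀ ++ (z ++ (ms ++ y)) := by
        intro ms; simp [List.append_assoc]
      have hbase : inv ((x₀ ++ pat p₀ ++ z) ++ pat p ++ y) ≤ n + 1 := hn
      have hbL : ∀ mt : W,
          inv (x₀ ++ mt ++ (z ++ pat p ++ y)) < inv (x₀ ++ pat p₀ ++ (z ++ pat p ++ y)) →
          inv ((x₀ ++ mt ++ z) ++ pat p ++ y) ≤ n := by
        intro mt hlt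
        rw [key mt] at hlt
        rw [show (x₀ ++ pat p₀ ++ (z ++ pat p ++ y) : W)
          = (x₀ ++ pat p₀ ++ z) ++ pat p ++ y from by simp [List.append_assoc]] at hlt
        omega
      have hbR : ∀ ms : W,
          inv ((x₀ ++ pat p₀ ++ z) ++ ms ++ y) < inv ((x₀ ++ pat p₀ ++ z) ++ pat p ++ y) →
          inv (x₀ ++ pat p₀ ++ (z ++ (ms ++ y))) ≤ n := by
        intro ms hlt
        rw [key2 ms] at hlt
        omega
      rw [hred]
      rw [show (x₀ ++ m1 p₀ ++ (z ++ pat p ++ y) : W) = (x₀ ++ m1 p₀ ++ z) ++ pat p ++ y from key _,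
          show (x₀ ++ m2 p₀ ++ (z ++ pat p ++ y) : W) = (x₀ ++ m2 p₀ ++ z) ++ pat p ++ y from key _,
          show (x₀ ++ m3 p₀ ++ (z ++ pat p ++ y) : W) = (x₀ ++ m3 p₀ ++ z) ++ pat p ++ y from key _]
      rw [IH (x₀ ++ m1 p₀ ++ z) p y (hbL (m1 p₀) (inv_m1_lt p₀ x₀ (z ++ pat p ++ y))),
          IH (x₀ ++ m2 p₀ ++ z) p y (hbL (m2 p₀) (inv_m2_lt p₀ x₀ (z ++ pat p ++ y))),
          IH (x₀ ++ m3 p₀ ++ z) p y (hbL (m3 p₀) (inv_m3_lt p₀ x₀ (z ++ pat p ++ y)))]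
      rw [show ((x₀ ++ pat p₀ ++ z) ++ m1 p ++ y : W) = x₀ ++ pat p₀ ++ (z ++ (m1 p ++ y)) from key2 _,
          show ((x₀ ++ pat p₀ ++ z) ++ m2 p ++ y : W) = x₀ ++ pat p₀ ++ (z ++ (m2 p ++ y)) from key2 _,
          show ((x₀ ++ pat p₀ ++ z) ++ m3 p ++ y : W) = x₀ ++ pat p₀ ++ (z ++ (m3 p ++ y)) from key2 _]
      rw [IH x₀ p₀ _ (hbR (m1 p) (inv_m1_lt p (x₀ ++ pat p₀ ++ z) y)),
          IH x₀ p₀ _ (hbR (m2 p) (inv_m2_lt p (x₀ ++ pat p₀ ++ z) y)),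
          IH x₀ p₀ _ (hbR (m3 p) (inv_m3_lt p (x₀ ++ pat p₀ ++ z) y))]
      simp only [List.append_assoc]
      module
    · -- overlap: our ddu at position |x|, found duu at |x|+1
      subst hp hp' hx hy
      rw [hred]
      have l1 : ((x ++ [true]) ++ m1 false ++ y₀ : W) = x ++ m1 true ++ (false :: y₀) := by
        simp
      have l3 : ((x ++ [true]) ++ m3 false ++ y₀ : W) = x ++ m3 true ++ (false :: y₀) := by
        simp
      have l2 : ((x ++ [true]) ++ m2 false ++ y₀ : W) = x ++ pat false ++ (true :: y₀) := by
        simp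
      have l2' : (x ++ m2 true ++ (false :: y₀) : W) = (x ++ [false]) ++ pat true ++ y₀ := by
        simp
      rw [l1, l2, l3, l2']
      have b1 : inv (x ++ pat false ++ (true :: y₀)) ≤ n := by
        have h1 := inv_m2_lt false (x ++ [true]) y₀
        rw [l2] at h1
        rw [show ((x ++ [true]) ++ pat false ++ y₀ : W)
          = x ++ pat true ++ (false :: y₀) from by simp] at h1
        omega
      have b2 : inv ((x ++ [false]) ++ pat true ++ y₀) ≤ n := by
        have h1 := inv_m2_lt true x (false :: y₀)
        rw [l2'] at h1
        omega
      rw [IH x false (true :: y₀) b1, IH (x ++ [false]) true y₀ b2]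
      simp only [List.append_assoc, List.cons_append, List.nil_append,
        m1_t, m1_f, m2_t, m2_f, m3_t, m3_f, pat_t, pat_f]
    · -- overlap: found ddu at position |x₀|, ours duu at |x₀|+1
      subst hp hp' hx hy
      rw [hred]
      have l1 : (x₀ ++ m1 true ++ (false :: y) : W) = (x₀ ++ [true]) ++ m1 false ++ y := by
        simp
      have l3 : (x₀ ++ m3 true ++ (false :: y) : W) = (x₀ ++ [true]) ++ m3 false ++ y := by
        simp
      have l2 : (x₀ ++ m2 true ++ (false :: y) : W) = (x₀ ++ [false]) ++ pat true ++ y := by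
        simp
      have l2' : ((x₀ ++ [true]) ++ m2 false ++ y : W) = x₀ ++ pat false ++ (true :: y) := by
        simp
      rw [l1, l2, l3, l2']
      have hn' : inv (x₀ ++ pat true ++ (false :: y)) ≤ n + 1 := by
        rw [show (x₀ ++ pat true ++ (false :: y) : W)
          = (x₀ ++ [true]) ++ pat false ++ y from by simp]
        exact hn
      have b1 : inv ((x₀ ++ [false]) ++ pat true ++ y) ≤ n := by
        have h1 := inv_m2_lt true x₀ (false :: y)
        rw [l2] at h1
        omega
      have b2 : inv (x₀ ++ pat false ++ (true :: y)) ≤ n := by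
        have h1 := inv_m2_lt false (x₀ ++ [true]) y
        rw [l2'] at h1
        rw [show ((x₀ ++ [true]) ++ pat false ++ y : W)
          = x₀ ++ pat true ++ (false :: y) from by simp] at h1
        omega
      rw [IH (x₀ ++ [false]) true y b1, IH x₀ false (true :: y) b2]
      simp only [List.append_assoc, List.cons_append, List.nil_append,
        m1_t, m1_f, m2_t, m2_f, m3_t, m3_f, pat_t, pat_f]

lemma red_nf (α β γ : ℂ) (q : ℕ × ℕ × ℕ) : red α β γ (nf q) = e q := by
  rw [red_none (split_nf q), parse_nf]

open MonoidAlgebra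

abbrev MA := MonoidAlgebra ℂ (FreeMonoid Bool)

def E : FreeAlgebra ℂ Bool ≃ₐ[ℂ] MA := FreeAlgebra.equivMonoidAlgebraFreeMonoid

def Rmap (α β γ : ℂ) : MA →ₗ[ℂ] V :=
  (Finsupp.linearCombination ℂ (red α β γ) : (FreeMonoid Bool →₀ ℂ) →ₗ[ℂ] V) ∘ₗ
    (MonoidAlgebra.coeffLinearEquiv ℂ).toLinearMap

lemma Rmap_single (α β γ : ℂ) (w : FreeMonoid Bool) (c : ℂ) :
    Rmap α β γ (MonoidAlgebra.single w c) = c • red α β γ w :=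
  Finsupp.linearCombination_single ℂ c w

def fm (l : List Bool) : FreeMonoid Bool := FreeMonoid.ofList l

lemma fm_mul (a b : List Bool) : fm a * fm b = fm (a ++ b) :=
  (FreeMonoid.ofList_append a b).symm

lemma E_ι (x : Bool) : E (FreeAlgebra.ι ℂ x) = MonoidAlgebra.single (fm [x]) 1 := by
  simp [E, FreeAlgebra.equivMonoidAlgebraFreeMonoid]
  rfl

lemma E_three (a b c : Bool) :
    E (FreeAlgebra.ι ℂ a * FreeAlgebra.ι ℂ b * FreeAlgebra.ι ℂ c)
      = MonoidAlgebra.single (fm [a, b, c]) 1 := by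
  rw [map_mul, map_mul, E_ι, E_ι, E_ι, MonoidAlgebra.single_mul_single,
    MonoidAlgebra.single_mul_single, fm_mul, fm_mul]
  norm_num

lemma Rmap_fm (α β γ : ℂ) (w : List Bool) (c : ℂ) :
    Rmap α β γ (MonoidAlgebra.single (fm w) c) = c • red α β γ w :=
  Finsupp.linearCombination_single ℂ c (fm w)

lemma sandwich (α β γ : ℂ) (a b : List Bool) (p : Bool) :
    Rmap α β γ (MonoidAlgebra.single (fm a) 1 * MonoidAlgebra.single (fm (pat p)) 1
        * MonoidAlgebra.single (fm b) 1)
      = α • Rmap α β γ (single (fm a) 1 * single (fm (m1 p)) 1 * single (fm b) 1)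
        + β • Rmap α β γ (single (fm a) 1 * single (fm (m2 p)) 1 * single (fm b) 1)
        + γ • Rmap α β γ (single (fm a) 1 * single (fm (m3 p)) 1 * single (fm b) 1) := by
  rw [MonoidAlgebra.single_mul_single, MonoidAlgebra.single_mul_single,
    MonoidAlgebra.single_mul_single, MonoidAlgebra.single_mul_single,
    MonoidAlgebra.single_mul_single, MonoidAlgebra.single_mul_single,
    MonoidAlgebra.single_mul_single, MonoidAlgebra.single_mul_single]
  rw [fm_mul, fm_mul, fm_mul, fm_mul, fm_mul, fm_mul, fm_mul, fm_mul]
  rw [Rmap_fm, Rmap_fm, Rmap_fm, Rmap_fm]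
  norm_num
  simpa [List.append_assoc] using red_step α β γ (inv (a ++ pat p ++ b)) a p b le_rfl

lemma ext2 {α β γ : ℂ} {A B : MA}
    (h : ∀ w w' : FreeMonoid Bool,
      Rmap α β γ (single w 1 * A * single w' 1) = Rmap α β γ (single w 1 * B * single w' 1)) :
    ∀ X Y : MA, Rmap α β γ (X * A * Y) = Rmap α β γ (X * B * Y) := by
  have hY : ∀ (w : FreeMonoid Bool) (Y : MA),
      Rmap α β γ (single w 1 * A * Y) = Rmap α β γ (single w 1 * B * Y) := by
    intro w Y
    induction Y using MonoidAlgebra.induction with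
    | zero => simp
    | single_add w' c Y _ _ ih =>
      rw [mul_add, mul_add, map_add, map_add, ih]
      congr 1
      have hsc : (single w' c : MA) = c • single w' 1 := by
        rw [MonoidAlgebra.smul_single, smul_eq_mul, mul_one]
      rw [hsc, mul_smul_comm, mul_smul_comm, map_smul, map_smul, h]
  intro X Y
  induction X using MonoidAlgebra.induction with
  | zero => simp
  | single_add w c X _ _ ih =>
    rw [add_mul, add_mul, add_mul, add_mul, map_add, map_add, ih]
    rw [add_left_inj]
    have hsc : (single w c : MA) = c • single w 1 := by
      rw [MonoidAlgebra.smul_single, smul_eq_mul, mul_one]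
    rw [hsc, smul_mul_assoc, smul_mul_assoc, smul_mul_assoc, smul_mul_assoc,
      map_smul, map_smul, hY]


theorem rel_resp (α β γ : ℂ) {a b : FreeAlgebra ℂ Bool}
    (h : RingQuot.Rel (DownUpRel α β γ) a b) :
    ∀ X Y : MA, Rmap α β γ (X * E a * Y) = Rmap α β γ (X * E b * Y) := by
  induction h with
  | of h =>
    cases h with
    | rel1 =>
      apply ext2
      intro w w'
      rw [E_three]
      rw [show E (α • (ι ℂ true * ι ℂ false * ι ℂ true)
            + β • (ι ℂ false * ι ℂ true * ι ℂ true) + γ • ι ℂ true)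
          = α • MonoidAlgebra.single (fm (m1 true)) 1
            + β • MonoidAlgebra.single (fm (m2 true)) 1
            + γ • MonoidAlgebra.single (fm (m3 true)) 1 from by
        rw [map_add, map_add, map_smul, map_smul, map_smul, E_three, E_three, E_ι]; rfl]
      rw [mul_add, mul_add, add_mul, add_mul, mul_smul_comm, mul_smul_comm, mul_smul_comm,
        smul_mul_assoc, smul_mul_assoc, smul_mul_assoc, map_add, map_add,
        map_smul, map_smul, map_smul]
      exact sandwich α β γ w w' true
    | rel2 =>
      apply ext2
      intro w w'
      rw [E_three]
      rw [show E (α • (ι ℂ false * ι ℂ true * ι ℂ false)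
            + β • (ι ℂ false * ι ℂ false * ι ℂ true) + γ • ι ℂ false)
          = α • MonoidAlgebra.single (fm (m1 false)) 1
            + β • MonoidAlgebra.single (fm (m2 false)) 1
            + γ • MonoidAlgebra.single (fm (m3 false)) 1 from by
        rw [map_add, map_add, map_smul, map_smul, map_smul, E_three, E_three, E_ι]; rfl]
      rw [mul_add, mul_add, add_mul, add_mul, mul_smul_comm, mul_smul_comm, mul_smul_comm,
        smul_mul_assoc, smul_mul_assoc, smul_mul_assoc, map_add, map_add,
        map_smul, map_smul, map_smul]
      exact sandwich α β γ w w' false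
  | add_left h ih =>
    intro X Y
    rename_i a' b' c'
    rw [map_add, map_add, mul_add, add_mul, mul_add, add_mul, map_add, map_add, ih X Y]
  | mul_left h ih =>
    intro X Y
    rename_i a' b' c'
    rw [show E (a' * c') = E a' * E c' from map_mul E _ _,
      show E (b' * c') = E b' * E c' from map_mul E _ _,
      ← mul_assoc, ← mul_assoc, mul_assoc (X * E a'), mul_assoc (X * E b')]
    exact ih X (E c' * Y)
  | mul_right h ih =>
    intro X Y
    rename_i a' b' c'
    rw [show E (a' * b') = E a' * E b' from map_mul E _ _,
      show E (a' * c') = E a' * E c' from map_mul E _ _, ← mul_assoc, ← mul_assoc]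
    exact ih (X * E a') Y

theorem eqv_resp (α β γ : ℂ) {a b : FreeAlgebra ℂ Bool}
    (h : Relation.EqvGen (RingQuot.Rel (DownUpRel α β γ)) a b) :
    Rmap α β γ (E a) = Rmap α β γ (E b) := by
  induction h with
  | rel a b h => simpa using rel_resp α β γ h 1 1
  | refl => rfl
  | symm _ _ _ ih => exact ih.symm
  | trans _ _ _ _ _ ih1 ih2 => exact ih1.trans ih2

theorem mk_eq (α β γ : ℂ) {a b : FreeAlgebra ℂ Bool}
    (h : RingQuot.mkAlgHom ℂ (DownUpRel α β γ) a = RingQuot.mkAlgHom ℂ (DownUpRel α β γ) b) :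
    Rmap α β γ (E a) = Rmap α β γ (E b) := by
  apply eqv_resp
  apply Quot.eqvGen_exact
  have h2 : (⟨Quot.mk _ a⟩ : RingQuot (DownUpRel α β γ)) = ⟨Quot.mk _ b⟩ := by
    simpa [RingQuot.mkAlgHom_def, RingQuot.mkRingHom_def] using h
  exact congrArg RingQuot.toQuot h2

def mkA (α β γ : ℂ) : FreeAlgebra ℂ Bool →ₐ[ℂ] DownUp α β γ :=
  RingQuot.mkAlgHom ℂ (DownUpRel α β γ)

def mkW (α β γ : ℂ) (w : List Bool) : DownUp α β γ :=
  mkA α β γ (E.symm (MonoidAlgebra.single (fm w) 1))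

lemma mkW_append (α β γ : ℂ) (a b : List Bool) :
    mkW α β γ (a ++ b) = mkW α β γ a * mkW α β γ b := by
  rw [mkW, mkW, mkW, ← fm_mul,
    show (MonoidAlgebra.single (fm a * fm b) (1:ℂ))
      = MonoidAlgebra.single (fm a) 1 * MonoidAlgebra.single (fm b) 1 from by
        rw [MonoidAlgebra.single_mul_single, one_mul],
    map_mul, map_mul]

lemma mkW_nil (α β γ : ℂ) : mkW α β γ [] = 1 := by
  rw [mkW, show (MonoidAlgebra.single (fm []) (1:ℂ)) = (1 : MA) from
    (MonoidAlgebra.one_def).symm, map_one, map_one]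

lemma E_symm_ι (x : Bool) : E.symm (MonoidAlgebra.single (fm [x]) 1) = FreeAlgebra.ι ℂ x := by
  rw [← E_ι]; exact E.symm_apply_apply _

lemma E_symm_three (a b c : Bool) :
    E.symm (MonoidAlgebra.single (fm [a, b, c]) 1)
      = FreeAlgebra.ι ℂ a * FreeAlgebra.ι ℂ b * FreeAlgebra.ι ℂ c := by
  rw [← E_three]; exact E.symm_apply_apply _

lemma mkW_gen (α β γ : ℂ) (x : Bool) :
    mkW α β γ [x] = RingQuot.mkAlgHom ℂ (DownUpRel α β γ) (FreeAlgebra.ι ℂ x) := by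
  rw [mkW, E_symm_ι]; rfl

lemma mkW_pat (α β γ : ℂ) (p : Bool) :
    mkW α β γ (pat p) = α • mkW α β γ (m1 p) + β • mkW α β γ (m2 p) + γ • mkW α β γ (m3 p) := by
  cases p
  · rw [pat_f, m1_f, m2_f, m3_f, mkW, mkW, mkW, mkW, E_symm_three, E_symm_three,
      E_symm_three, E_symm_ι, mkA]
    rw [RingQuot.mkAlgHom_rel ℂ DownUpRel.rel2]
    rw [map_add, map_add, map_smul, map_smul, map_smul]
  · rw [pat_t, m1_t, m2_t, m3_t, mkW, mkW, mkW, mkW, E_symm_three, E_symm_three,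
      E_symm_three, E_symm_ι, mkA]
    rw [RingQuot.mkAlgHom_rel ℂ DownUpRel.rel1]
    rw [map_add, map_add, map_smul, map_smul, map_smul]

abbrev fam (α β γ : ℂ) : ℕ × ℕ × ℕ → DownUp α β γ := fun x =>
  DownUp.u α β γ ^ x.1 * (DownUp.d α β γ * DownUp.u α β γ) ^ x.2.1 * DownUp.d α β γ ^ x.2.2

lemma mkW_replicate (α β γ : ℂ) (b : Bool) (k : ℕ) :
    mkW α β γ (List.replicate k b) = mkW α β γ [b] ^ k := by
  induction k with
  | zero => rw [List.replicate_zero, mkW_nil, pow_zero]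
  | succ k ih =>
    rw [show List.replicate (k+1) b = [b] ++ List.replicate k b from rfl,
      mkW_append, ih, pow_succ']

lemma mkW_duRep (α β γ : ℂ) (j : ℕ) :
    mkW α β γ (duRep j) = (mkW α β γ [true] * mkW α β γ [false]) ^ j := by
  induction j with
  | zero => rw [duRep, mkW_nil, pow_zero]
  | succ j ih =>
    rw [show duRep (j+1) = [true] ++ ([false] ++ duRep j) from rfl,
      mkW_append, mkW_append, ih, pow_succ', mul_assoc]

lemma mkW_nf (α β γ : ℂ) (q : ℕ × ℕ × ℕ) : mkW α β γ (nf q) = fam α β γ q := by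
  obtain ⟨i, j, k⟩ := q
  show mkW α β γ (List.replicate i false ++ (duRep j ++ List.replicate k true)) = _
  rw [mkW_append, mkW_append, mkW_replicate, mkW_duRep, mkW_replicate,
    mkW_gen, mkW_gen]
  show DownUp.u α β γ ^ i * ((DownUp.d α β γ * DownUp.u α β γ) ^ j * DownUp.d α β γ ^ k) = _
  rw [← mul_assoc]

lemma span_mem (α β γ : ℂ) : ∀ (n : ℕ) (w : List Bool), inv w ≤ n →
    mkW α β γ w ∈ Submodule.span ℂ (Set.range (fam α β γ)) := by
  intro n
  induction n with
  | zero =>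
    intro w hw
    cases h : split w with
    | none =>
      rw [show w = nf (parse w) from split_none w h, mkW_nf]
      exact Submodule.subset_span ⟨parse w, rfl⟩
    | some r =>
      exfalso
      obtain ⟨x, p, y⟩ := r
      have hw' := split_eq _ h
      rw [hw', inv_triple] at hw
      cases p <;> simp [inv, List.count_cons] at hw
  | succ n IH =>
    intro w hw
    cases h : split w with
    | none =>
      rw [show w = nf (parse w) from split_none w h, mkW_nf]
      exact Submodule.subset_span ⟨parse w, rfl⟩
    | some r =>
      obtain ⟨x, p, y⟩ := r
      have hw' := split_eq _ h
      rw [hw'] at hw ⊢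
      rw [mkW_append, mkW_append, mkW_pat, mul_add, mul_add, add_mul, add_mul,
        mul_smul_comm, mul_smul_comm, mul_smul_comm,
        smul_mul_assoc, smul_mul_assoc, smul_mul_assoc,
        ← mkW_append, ← mkW_append, ← mkW_append, ← mkW_append, ← mkW_append, ← mkW_append]
      have b1 : inv (x ++ m1 p ++ y) ≤ n := by have := inv_m1_lt p x y; omega
      have b2 : inv (x ++ m2 p ++ y) ≤ n := by have := inv_m2_lt p x y; omega
      have b3 : inv (x ++ m3 p ++ y) ≤ n := by have := inv_m3_lt p x y; omega
      exact add_mem (add_mem (Submodule.smul_mem _ _ (IH _ b1))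
        (Submodule.smul_mem _ _ (IH _ b2))) (Submodule.smul_mem _ _ (IH _ b3))

theorem span_top (α β γ : ℂ) :
    Submodule.span ℂ (Set.range (fam α β γ)) = ⊤ := by
  rw [Submodule.eq_top_iff']
  intro z
  obtain ⟨a, rfl⟩ := RingQuot.mkAlgHom_surjective ℂ (DownUpRel α β γ) z
  have key : ∀ Q : MA, mkA α β γ (E.symm Q) ∈ Submodule.span ℂ (Set.range (fam α β γ)) := by
    intro Q
    induction Q using MonoidAlgebra.induction with
    | zero => rw [map_zero, map_zero]; exact zero_mem _
    | single_add w c Q _ _ ih =>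
      rw [map_add, map_add]
      refine add_mem ?_ ih
      rw [show (MonoidAlgebra.single w c : MA) = c • MonoidAlgebra.single (fm w) 1 from by
        rw [MonoidAlgebra.smul_single, smul_eq_mul, mul_one]; rfl,
        map_smul, map_smul]
      exact Submodule.smul_mem _ _ (span_mem α β γ (inv w) w le_rfl)
  have : RingQuot.mkAlgHom ℂ (DownUpRel α β γ) a = mkA α β γ (E.symm (E a)) := by
    rw [E.symm_apply_apply]; rfl
  rw [this]
  exact key (E a)

theorem indep (α β γ : ℂ) : LinearIndependent ℂ (fam α β γ) := by
  rw [linearIndependent_iff]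
  intro l hl
  set v0 : ℕ × ℕ × ℕ → MA := fun q => MonoidAlgebra.single (fm (nf q)) 1 with hv0
  set mm : MA →ₗ[ℂ] DownUp α β γ := (mkA α β γ).toLinearMap ∘ₗ (E.symm : MA ≃ₐ[ℂ] FreeAlgebra ℂ Bool).toLinearMap with hmm
  have hfun : fam α β γ = ⇑mm ∘ v0 := by
    funext q
    exact (mkW_nf α β γ q).symm
  have h1 : Finsupp.linearCombination ℂ (fam α β γ) l
      = mm (Finsupp.linearCombination ℂ v0 l) := by
    rw [hfun]
    exact (Finsupp.apply_linearCombination _ _ _ _).symm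
  have h0 : mkA α β γ (E.symm (Finsupp.linearCombination ℂ v0 l)) = mkA α β γ 0 := by
    rw [map_zero]
    rw [h1] at hl
    exact hl
  have h3 := mk_eq α β γ h0
  rw [E.apply_symm_apply, map_zero, map_zero] at h3
  have h4 : Rmap α β γ (Finsupp.linearCombination ℂ v0 l) = l := by
    rw [Finsupp.apply_linearCombination]
    have he : (⇑(Rmap α β γ) ∘ v0) = e := by
      funext q
      show Rmap α β γ (MonoidAlgebra.single (fm (nf q)) 1) = e q
      rw [Rmap_fm, one_smul, red_nf]
    rw [he, Finsupp.linearCombination_apply]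
    rw [show (fun (q : ℕ × ℕ × ℕ) (c : ℂ) => c • e q)
        = fun q c => Finsupp.single q c from by
      funext q c; rw [e, Finsupp.smul_single, smul_eq_mul, mul_one]]
    exact Finsupp.sum_single l
  rw [← h4, h3]

end

end DownUpPBW

/-- Theorem 3.1 (PBW theorem): the monomials uⁱ(du)ʲdᵏ form a ℂ-basis of A(α,β,γ). -/
theorem downUp_pbw (α β γ : ℂ) :
    LinearIndependent ℂ (fun x : ℕ × ℕ × ℕ =>
      DownUp.u α β γ ^ x.1 * (DownUp.d α β γ * DownUp.u α β γ) ^ x.2.1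
        * DownUp.d α β γ ^ x.2.2) ∧
    Submodule.span ℂ (Set.range (fun x : ℕ × ℕ × ℕ =>
      DownUp.u α β γ ^ x.1 * (DownUp.d α β γ * DownUp.u α β γ) ^ x.2.1
        * DownUp.d α β γ ^ x.2.2)) = ⊤ :=
  ⟨DownUpPBW.indep α β γ, DownUpPBW.span_top α β γ⟩
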